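/- arXiv:2602.17950 — 3 statements merged into one kernel-verified Lean document; each statement's English description precedes it below -/
import Mathlib

section
/- (Virial identity) Let Φ_g = (φ₁^g, φ₀^g, φ₋₁^g)ᵀ ∈ M be a ground state of the rotating spin-orbit coupled spin-1 BEC with harmonic potential V. Then 2E_kin(Φ_g) − 2E_pot(Φ_g) + d·E_spin(Φ_g) + E_soc(Φ_g) = 0 for d = 2, 3. -/
open MeasureTheory Complex

noncomputable section

abbrev Pt (d : ℕ) := EuclideanSpace ℝ (Fin d)

/-- Classical partial derivative `∂_j f`, junk `0` if `j ≥ d`. -/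
def pdC (d : ℕ) (f : Pt d → ℂ) (j : ℕ) (x : Pt d) : ℂ :=
  if h : j < d then fderiv ℝ f x (EuclideanSpace.single ⟨j, h⟩ 1) else 0

def nthC (d : ℕ) (x : Pt d) (j : ℕ) : ℝ := if h : j < d then x ⟨j, h⟩ else 0

/-- `L₀ = i∂ₓ + ∂_y`. -/
def L0op (d : ℕ) (f : Pt d → ℂ) (x : Pt d) : ℂ := Complex.I * pdC d f 0 x + pdC d f 1 x

/-- `L₁ = i∂ₓ − ∂_y`. -/
def L1op (d : ℕ) (f : Pt d → ℂ) (x : Pt d) : ℂ := Complex.I * pdC d f 0 x - pdC d f 1 x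

/-- Rotation operator `L_z = −i(x∂_y − y∂ₓ)`. -/
def Lzop (d : ℕ) (f : Pt d → ℂ) (x : Pt d) : ℂ :=
  -Complex.I * (((nthC d x 0 : ℝ) : ℂ) * pdC d f 1 x - ((nthC d x 1 : ℝ) : ℂ) * pdC d f 0 x)

/-- `|∇f|²`. -/
def gradsq (d : ℕ) (f : Pt d → ℂ) (x : Pt d) : ℝ := ∑ j : Fin d, ‖pdC d f j x‖ ^ 2

/-- Total density `ρ = |φ₁|² + |φ₀|² + |φ₋₁|²`. -/
def rho (d : ℕ) (φ1 φ0 φm1 : Pt d → ℂ) (x : Pt d) : ℝ :=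
  ‖φ1 x‖ ^ 2 + ‖φ0 x‖ ^ 2 + ‖φm1 x‖ ^ 2

/-- Spin vector magnitude squared `|F|²`. -/
def Fsq (d : ℕ) (φ1 φ0 φm1 : Pt d → ℂ) (x : Pt d) : ℝ :=
  2 * ((((starRingEnd ℂ) (φ1 x) + (starRingEnd ℂ) (φm1 x)) * φ0 x).re) ^ 2
    + 2 * ((φ0 x * ((starRingEnd ℂ) (φm1 x) - (starRingEnd ℂ) (φ1 x))).im) ^ 2
    + (‖φ1 x‖ ^ 2 - ‖φm1 x‖ ^ 2) ^ 2

/-- The (real) SOC integrand `Φ†SΦ = φ̄₁L₀φ₀ + φ̄₀(L₀φ₋₁ + L₁φ₁) + φ̄₋₁L₁φ₀`. -/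
def socDen (d : ℕ) (φ1 φ0 φm1 : Pt d → ℂ) (x : Pt d) : ℝ :=
  ((starRingEnd ℂ) (φ1 x) * L0op d φ0 x
    + (starRingEnd ℂ) (φ0 x) * (L0op d φm1 x + L1op d φ1 x)
    + (starRingEnd ℂ) (φm1 x) * L1op d φ0 x).re

/-- The (real) rotation integrand `φ̄ L_z φ`. -/
def rotDen (d : ℕ) (φ : Pt d → ℂ) (x : Pt d) : ℝ :=
  ((starRingEnd ℂ) (φ x) * Lzop d φ x).re

/-- Kinetic energy. -/
def Ekin (d : ℕ) (φ1 φ0 φm1 : Pt d → ℂ) : ℝ :=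
  (1 / 2 : ℝ) * ∫ x, (gradsq d φ1 x + gradsq d φ0 x + gradsq d φm1 x)

/-- Potential energy. -/
def Epot (d : ℕ) (V : Pt d → ℝ) (φ1 φ0 φm1 : Pt d → ℂ) : ℝ :=
  ∫ x, V x * rho d φ1 φ0 φm1 x

/-- Interaction (spin) energy. -/
def Espin (d : ℕ) (c0 c1 : ℝ) (φ1 φ0 φm1 : Pt d → ℂ) : ℝ :=
  ∫ x, (c0 / 2 * (rho d φ1 φ0 φm1 x) ^ 2 + c1 / 2 * Fsq d φ1 φ0 φm1 x)

/-- Rotation energy. -/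
def Erot (d : ℕ) (Ω : ℝ) (φ1 φ0 φm1 : Pt d → ℂ) : ℝ :=
  -Ω * ∫ x, (rotDen d φ1 x + rotDen d φ0 x + rotDen d φm1 x)

/-- Spin-orbit coupling energy. -/
def Esoc (d : ℕ) (γ : ℝ) (φ1 φ0 φm1 : Pt d → ℂ) : ℝ :=
  -γ * ∫ x, socDen d φ1 φ0 φm1 x

/-- Total energy of the rotating SOC spin-1 BEC. -/
def Etot (d : ℕ) (V : Pt d → ℝ) (c0 c1 Ω γ : ℝ) (φ1 φ0 φm1 : Pt d → ℂ) : ℝ :=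
  Ekin d φ1 φ0 φm1 + Epot d V φ1 φ0 φm1 + Espin d c0 c1 φ1 φ0 φm1
    + Erot d Ω φ1 φ0 φm1 + Esoc d γ φ1 φ0 φm1

/-- The constraint manifold `M`: triples in `H¹ ∩ L²_V` (with all energy integrands
integrable) of unit total mass. -/
def InM (d : ℕ) (V : Pt d → ℝ) (φ1 φ0 φm1 : Pt d → ℂ) : Prop :=
  Differentiable ℝ φ1 ∧ Differentiable ℝ φ0 ∧ Differentiable ℝ φm1 ∧
  Integrable (fun x => rho d φ1 φ0 φm1 x) ∧
  Integrable (fun x => gradsq d φ1 x + gradsq d φ0 x + gradsq d φm1 x) ∧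
  Integrable (fun x => V x * rho d φ1 φ0 φm1 x) ∧
  Integrable (fun x => (rho d φ1 φ0 φm1 x) ^ 2) ∧
  Integrable (fun x => Fsq d φ1 φ0 φm1 x) ∧
  Integrable (fun x => rotDen d φ1 x + rotDen d φ0 x + rotDen d φm1 x) ∧
  Integrable (fun x => socDen d φ1 φ0 φm1 x) ∧
  (∫ x, rho d φ1 φ0 φm1 x) = 1


/-! ### Auxiliary scaling lemmas -/

section ScaleAux

variable {d : ℕ} {t a : ℝ}

lemma pdC_scale (φ : Pt d → ℂ) (hφ : Differentiable ℝ φ) (j : ℕ) (x : Pt d) :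
    pdC d (fun y => (a : ℂ) * φ (t • y)) j x = (a : ℂ) * (t : ℂ) * pdC d φ j (t • x) := by
  unfold pdC
  split
  · have h1 : HasFDerivAt (fun y : Pt d => t • y)
        (t • (ContinuousLinearMap.id ℝ (Pt d))) x := (hasFDerivAt_id x).const_smul t
    have h2 : HasFDerivAt (fun y : Pt d => φ (t • y))
        ((fderiv ℝ φ (t • x)).comp (t • (ContinuousLinearMap.id ℝ (Pt d)))) x :=
      ((hφ (t • x)).hasFDerivAt).comp x h1
    have h3 := h2.const_mul (a : ℂ)
    rw [h3.fderiv]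
    simp [ContinuousLinearMap.smul_apply, Complex.real_smul]
    ring
  · ring

lemma nthC_smul (x : Pt d) (j : ℕ) : nthC d (t • x) j = t * nthC d x j := by
  unfold nthC
  split
  · rfl
  · ring

lemma gradsq_scale (φ : Pt d → ℂ) (hφ : Differentiable ℝ φ) (x : Pt d) :
    gradsq d (fun y => (a : ℂ) * φ (t • y)) x = a ^ 2 * t ^ 2 * gradsq d φ (t • x) := by
  simp only [gradsq, pdC_scale φ hφ, Finset.mul_sum]
  refine Finset.sum_congr rfl fun j _ => ?_
  rw [norm_mul, norm_mul, mul_pow, mul_pow, Complex.norm_real, Complex.norm_real,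
    Real.norm_eq_abs, Real.norm_eq_abs, _root_.sq_abs, _root_.sq_abs]

lemma rho_scale (φ1 φ0 φm1 : Pt d → ℂ) (x : Pt d) :
    rho d (fun y => (a : ℂ) * φ1 (t • y)) (fun y => (a : ℂ) * φ0 (t • y))
      (fun y => (a : ℂ) * φm1 (t • y)) x = a ^ 2 * rho d φ1 φ0 φm1 (t • x) := by
  simp only [rho, norm_mul, Complex.norm_real, Real.norm_eq_abs, mul_pow, _root_.sq_abs]
  ring

lemma Fsq_scale (φ1 φ0 φm1 : Pt d → ℂ) (x : Pt d) :
    Fsq d (fun y => (a : ℂ) * φ1 (t • y)) (fun y => (a : ℂ) * φ0 (t • y))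
      (fun y => (a : ℂ) * φm1 (t • y)) x = a ^ 4 * Fsq d φ1 φ0 φm1 (t • x) := by
  simp only [Fsq, map_mul, Complex.conj_ofReal]
  set z1 := φ1 (t • x)
  set z0 := φ0 (t • x)
  set zm := φm1 (t • x)
  rw [show ((a : ℂ) * (starRingEnd ℂ) z1 + (a : ℂ) * (starRingEnd ℂ) zm) * ((a : ℂ) * z0)
      = ((a ^ 2 : ℝ) : ℂ) * (((starRingEnd ℂ) z1 + (starRingEnd ℂ) zm) * z0) by
        push_cast; ring,
    show ((a : ℂ) * z0) * ((a : ℂ) * (starRingEnd ℂ) zm - (a : ℂ) * (starRingEnd ℂ) z1)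
      = ((a ^ 2 : ℝ) : ℂ) * (z0 * ((starRingEnd ℂ) zm - (starRingEnd ℂ) z1)) by
        push_cast; ring,
    Complex.re_ofReal_mul, Complex.im_ofReal_mul]
  simp only [norm_mul, Complex.norm_real, Real.norm_eq_abs, mul_pow, _root_.sq_abs]
  ring

lemma L0op_scale (φ : Pt d → ℂ) (hφ : Differentiable ℝ φ) (x : Pt d) :
    L0op d (fun y => (a : ℂ) * φ (t • y)) x = (a : ℂ) * (t : ℂ) * L0op d φ (t • x) := by
  simp only [L0op, pdC_scale φ hφ]
  ring

lemma L1op_scale (φ : Pt d → ℂ) (hφ : Differentiable ℝ φ) (x : Pt d) :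
    L1op d (fun y => (a : ℂ) * φ (t • y)) x = (a : ℂ) * (t : ℂ) * L1op d φ (t • x) := by
  simp only [L1op, pdC_scale φ hφ]
  ring

lemma socDen_scale (φ1 φ0 φm1 : Pt d → ℂ) (h1 : Differentiable ℝ φ1)
    (h0 : Differentiable ℝ φ0) (hm : Differentiable ℝ φm1) (x : Pt d) :
    socDen d (fun y => (a : ℂ) * φ1 (t • y)) (fun y => (a : ℂ) * φ0 (t • y))
      (fun y => (a : ℂ) * φm1 (t • y)) x = a ^ 2 * t * socDen d φ1 φ0 φm1 (t • x) := by
  simp only [socDen, L0op_scale φ0 h0, L0op_scale φm1 hm, L1op_scale φ1 h1,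
    L1op_scale φ0 h0, map_mul, Complex.conj_ofReal]
  rw [← Complex.re_ofReal_mul]
  congr 1
  push_cast
  ring

lemma rotDen_scale (φ : Pt d → ℂ) (hφ : Differentiable ℝ φ) (x : Pt d) :
    rotDen d (fun y => (a : ℂ) * φ (t • y)) x = a ^ 2 * rotDen d φ (t • x) := by
  simp only [rotDen, Lzop, pdC_scale φ hφ, nthC_smul, map_mul, Complex.conj_ofReal]
  rw [← Complex.re_ofReal_mul]
  congr 1
  push_cast
  ring

end ScaleAux

lemma smul_integral_comp (d : ℕ) {t : ℝ} (ht : 0 < t) (f : Pt d → ℝ) :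
    ∫ x, f (t • x) = (t ^ d)⁻¹ * ∫ x, f x := by
  rw [Measure.integral_comp_smul volume f t, finrank_euclideanSpace_fin,
    abs_of_pos (by positivity), smul_eq_mul]

lemma scale_spec (d : ℕ) (c0 c1 Ω γ : ℝ) (γv : Fin d → ℝ)
    (V : Pt d → ℝ) (hV : ∀ x, V x = 1 / 2 * ∑ j : Fin d, (γv j) ^ 2 * (x j) ^ 2)
    (g1 g0 gm1 : Pt d → ℂ) (hg : InM d V g1 g0 gm1) (t : ℝ) (ht : 0 < t) :
    InM d V (fun y => ((Real.sqrt (t ^ d) : ℝ) : ℂ) * g1 (t • y))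
        (fun y => ((Real.sqrt (t ^ d) : ℝ) : ℂ) * g0 (t • y))
        (fun y => ((Real.sqrt (t ^ d) : ℝ) : ℂ) * gm1 (t • y)) ∧
      Etot d V c0 c1 Ω γ (fun y => ((Real.sqrt (t ^ d) : ℝ) : ℂ) * g1 (t • y))
          (fun y => ((Real.sqrt (t ^ d) : ℝ) : ℂ) * g0 (t • y))
          (fun y => ((Real.sqrt (t ^ d) : ℝ) : ℂ) * gm1 (t • y))
        = t ^ 2 * Ekin d g1 g0 gm1 + (t ^ 2)⁻¹ * Epot d V g1 g0 gm1
          + t ^ d * Espin d c0 c1 g1 g0 gm1 + Erot d Ω g1 g0 gm1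
          + t * Esoc d γ g1 g0 gm1 := by
  obtain ⟨h1, h0, hm, hρ, hK, hP, hρ2, hF, hR, hC, hmass⟩ := hg
  set a : ℝ := Real.sqrt (t ^ d) with ha
  have ha2 : a ^ 2 = t ^ d := Real.sq_sqrt (by positivity)
  have htd : (0 : ℝ) < t ^ d := by positivity
  have hVt : ∀ x : Pt d, V (t • x) = t ^ 2 * V x := by
    intro x
    simp only [hV, PiLp.smul_apply, smul_eq_mul]
    rw [Finset.mul_sum, Finset.mul_sum, Finset.mul_sum]
    exact Finset.sum_congr rfl fun j _ => by ring
  -- integrand identities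
  have egrad : (fun x => gradsq d (fun y => (a : ℂ) * g1 (t • y)) x
        + gradsq d (fun y => (a : ℂ) * g0 (t • y)) x
        + gradsq d (fun y => (a : ℂ) * gm1 (t • y)) x)
      = fun x => t ^ (d + 2) *
        ((fun y => gradsq d g1 y + gradsq d g0 y + gradsq d gm1 y) (t • x)) := by
    funext x
    simp only [gradsq_scale g1 h1, gradsq_scale g0 h0, gradsq_scale gm1 hm, ha2, pow_add]
    ring
  have erho : (fun x => rho d (fun y => (a : ℂ) * g1 (t • y))
        (fun y => (a : ℂ) * g0 (t • y)) (fun y => (a : ℂ) * gm1 (t • y)) x)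
      = fun x => t ^ d * ((fun y => rho d g1 g0 gm1 y) (t • x)) := by
    funext x
    rw [rho_scale, ha2]
  have epot : (fun x => V x * rho d (fun y => (a : ℂ) * g1 (t • y))
        (fun y => (a : ℂ) * g0 (t • y)) (fun y => (a : ℂ) * gm1 (t • y)) x)
      = fun x => t ^ d * (t ^ 2)⁻¹ * ((fun y => V y * rho d g1 g0 gm1 y) (t • x)) := by
    funext x
    rw [rho_scale, ha2]
    have hx : V x = (t ^ 2)⁻¹ * V (t • x) := by
      rw [hVt]; field_simp
    rw [hx]
    ring
  have espin : (fun x => c0 / 2 * (rho d (fun y => (a : ℂ) * g1 (t • y))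
          (fun y => (a : ℂ) * g0 (t • y)) (fun y => (a : ℂ) * gm1 (t • y)) x) ^ 2
        + c1 / 2 * Fsq d (fun y => (a : ℂ) * g1 (t • y))
          (fun y => (a : ℂ) * g0 (t • y)) (fun y => (a : ℂ) * gm1 (t • y)) x)
      = fun x => t ^ (2 * d) *
        ((fun y => c0 / 2 * (rho d g1 g0 gm1 y) ^ 2 + c1 / 2 * Fsq d g1 g0 gm1 y) (t • x)) := by
    funext x
    rw [rho_scale, Fsq_scale, show a ^ 4 = t ^ (2 * d) by
      rw [show a ^ 4 = (a ^ 2) ^ 2 by ring, ha2, ← pow_mul, Nat.mul_comm],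
      show t ^ (2 * d) = (t ^ d) ^ 2 by rw [← pow_mul, Nat.mul_comm], ← ha2]
    ring
  have erho2 : (fun x => (rho d (fun y => (a : ℂ) * g1 (t • y))
        (fun y => (a : ℂ) * g0 (t • y)) (fun y => (a : ℂ) * gm1 (t • y)) x) ^ 2)
      = fun x => t ^ (2 * d) * ((fun y => (rho d g1 g0 gm1 y) ^ 2) (t • x)) := by
    funext x
    rw [rho_scale, ha2, mul_pow, ← pow_mul, Nat.mul_comm]
  have eF : (fun x => Fsq d (fun y => (a : ℂ) * g1 (t • y))
        (fun y => (a : ℂ) * g0 (t • y)) (fun y => (a : ℂ) * gm1 (t • y)) x)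
      = fun x => t ^ (2 * d) * ((fun y => Fsq d g1 g0 gm1 y) (t • x)) := by
    funext x
    rw [Fsq_scale, show a ^ 4 = t ^ (2 * d) by
      rw [show a ^ 4 = (a ^ 2) ^ 2 by ring, ha2, ← pow_mul, Nat.mul_comm]]
  have erot : (fun x => rotDen d (fun y => (a : ℂ) * g1 (t • y)) x
        + rotDen d (fun y => (a : ℂ) * g0 (t • y)) x
        + rotDen d (fun y => (a : ℂ) * gm1 (t • y)) x)
      = fun x => t ^ d *
        ((fun y => rotDen d g1 y + rotDen d g0 y + rotDen d gm1 y) (t • x)) := by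
    funext x
    simp only [rotDen_scale g1 h1, rotDen_scale g0 h0, rotDen_scale gm1 hm, ha2]
    ring
  have esoc : (fun x => socDen d (fun y => (a : ℂ) * g1 (t • y))
        (fun y => (a : ℂ) * g0 (t • y)) (fun y => (a : ℂ) * gm1 (t • y)) x)
      = fun x => t ^ d * t * ((fun y => socDen d g1 g0 gm1 y) (t • x)) := by
    funext x
    rw [socDen_scale g1 g0 gm1 h1 h0 hm, ha2]
  -- differentiability of the rescaled functions
  have hdiff : ∀ φ : Pt d → ℂ, Differentiable ℝ φ →
      Differentiable ℝ (fun y : Pt d => (a : ℂ) * φ (t • y)) := fun φ hφ =>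
    (hφ.comp (differentiable_id.const_smul t)).const_mul _
  refine ⟨⟨hdiff g1 h1, hdiff g0 h0, hdiff gm1 hm, ?_, ?_, ?_, ?_, ?_, ?_, ?_, ?_⟩, ?_⟩
  · rw [erho]; exact (hρ.comp_smul ht.ne').const_mul _
  · rw [egrad]; exact (hK.comp_smul ht.ne').const_mul _
  · rw [epot]; exact (hP.comp_smul ht.ne').const_mul _
  · rw [erho2]; exact (hρ2.comp_smul ht.ne').const_mul _
  · rw [eF]; exact (hF.comp_smul ht.ne').const_mul _
  · rw [erot]; exact (hR.comp_smul ht.ne').const_mul _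
  · rw [esoc]; exact (hC.comp_smul ht.ne').const_mul _
  · rw [erho, MeasureTheory.integral_const_mul _ _, smul_integral_comp d ht (fun y => rho d g1 g0 gm1 y), hmass]
    field_simp
  · unfold Etot Ekin Epot Espin Erot Esoc
    rw [egrad, epot, espin, erot, esoc,
      MeasureTheory.integral_const_mul _ _, MeasureTheory.integral_const_mul _ _, MeasureTheory.integral_const_mul _ _, MeasureTheory.integral_const_mul _ _,
      MeasureTheory.integral_const_mul _ _,
      smul_integral_comp d ht (fun y => gradsq d g1 y + gradsq d g0 y + gradsq d gm1 y),
      smul_integral_comp d ht (fun y => V y * rho d g1 g0 gm1 y),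
      smul_integral_comp d ht
        (fun y => c0 / 2 * (rho d g1 g0 gm1 y) ^ 2 + c1 / 2 * Fsq d g1 g0 gm1 y),
      smul_integral_comp d ht (fun y => rotDen d g1 y + rotDen d g0 y + rotDen d gm1 y),
      smul_integral_comp d ht (fun y => socDen d g1 g0 gm1 y)]
    rw [pow_add, two_mul, pow_add]
    field_simp

lemma virial_min (d : ℕ) (K P S R C E : ℝ) (hE : E = K + P + S + R + C)
    (h : ∀ s : ℝ, 0 < s →
      E ≤ s ^ 2 * K + (s ^ 2)⁻¹ * P + s ^ d * S + R + s * C) :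
    2 * K - 2 * P + (d : ℝ) * S + C = 0 := by
  set F : ℝ → ℝ := fun s => s ^ 2 * K + s ^ (-2 : ℤ) * P + s ^ d * S + R + s * C with hF
  have hloc : IsLocalMin F 1 := by
    have hmem : Set.Ioi (0 : ℝ) ∈ nhds 1 := Ioi_mem_nhds one_pos
    filter_upwards [hmem] with s hs
    have hFs : F s = s ^ 2 * K + (s ^ 2)⁻¹ * P + s ^ d * S + R + s * C := by
      simp only [hF]
      rw [zpow_neg]
      norm_cast
    have hF1 : F 1 = E := by
      simp only [hF, one_pow, one_zpow, one_mul, hE]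
    rw [hF1, hFs]
    exact h s hs
  have hd2' : HasDerivAt (fun s : ℝ => s ^ 2) 2 1 := by simpa using hasDerivAt_pow 2 (1 : ℝ)
  have hdz : HasDerivAt (fun s : ℝ => s ^ (-2 : ℤ)) (-2) 1 := by
    simpa using hasDerivAt_zpow (-2) (1 : ℝ) (Or.inl one_ne_zero)
  have hdp : HasDerivAt (fun s : ℝ => s ^ d) d 1 := by simpa using hasDerivAt_pow d (1 : ℝ)
  have hdi : HasDerivAt (fun s : ℝ => s) 1 1 := hasDerivAt_id 1
  have hder : HasDerivAt F (2 * K + (-2) * P + (d : ℝ) * S + 1 * C) 1 :=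
    ((((hd2'.mul_const K).add (hdz.mul_const P)).add (hdp.mul_const S)).add_const R).add
      (hdi.mul_const C)
  have h0 := hloc.hasDerivAt_eq_zero hder
  linarith

/-- Virial identity: for a ground state `Φ_g` of the rotating SOC spin-1 BEC in a
harmonic potential, `2E_kin − 2E_pot + d·E_spin + E_soc = 0` (`d = 2, 3`). -/
theorem stmt10 (d : ℕ) (hd2 : 2 ≤ d) (hd3 : d ≤ 3)
    (c0 c1 Ω γ : ℝ) (γv : Fin d → ℝ) (hγv : ∀ j, 0 < γv j)
    (V : Pt d → ℝ) (hV : ∀ x, V x = 1 / 2 * ∑ j : Fin d, (γv j) ^ 2 * (x j) ^ 2)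
    (g1 g0 gm1 : Pt d → ℂ) (hg : InM d V g1 g0 gm1)
    (hmin : ∀ ψ1 ψ0 ψm1 : Pt d → ℂ, InM d V ψ1 ψ0 ψm1 →
      Etot d V c0 c1 Ω γ g1 g0 gm1 ≤ Etot d V c0 c1 Ω γ ψ1 ψ0 ψm1) :
    2 * Ekin d g1 g0 gm1 - 2 * Epot d V g1 g0 gm1
      + (d : ℝ) * Espin d c0 c1 g1 g0 gm1 + Esoc d γ g1 g0 gm1 = 0 := by
  refine virial_min d (Ekin d g1 g0 gm1) (Epot d V g1 g0 gm1) (Espin d c0 c1 g1 g0 gm1)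
    (Erot d Ω g1 g0 gm1) (Esoc d γ g1 g0 gm1) (Etot d V c0 c1 Ω γ g1 g0 gm1) rfl ?_
  intro s hs
  obtain ⟨hmem, heq⟩ := scale_spec d c0 c1 Ω γ γv V hV g1 g0 gm1 hg s hs
  have h := hmin _ _ _ hmem
  rw [heq] at h
  linarith

end
end

section
/- (Negativity of SOC energy) Suppose Φ_g ∈ M is a ground state of the rotating spin-orbit coupled spin-1 BEC with a radially symmetric trapping potential V(x) = V(|x|). Then E_soc(Φ_g) ≤ 0. -/
open MeasureTheory Complex

noncomputable section

/-- Rotation of `ℝ^d` by angle `θ` about the `z`-axis (planar rotation in the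
first two coordinates). -/
def RotPt (d : ℕ) (θ : ℝ) (x : Pt d) : Pt d :=
  (WithLp.equiv 2 (∀ _ : Fin d, ℝ)).symm fun j =>
    if (j : ℕ) = 0 then Real.cos θ * nthC d x 0 - Real.sin θ * nthC d x 1
    else if (j : ℕ) = 1 then Real.sin θ * nthC d x 0 + Real.cos θ * nthC d x 1
    else x j


namespace Stmt12Aux

def s2 (j : ℕ) : ℝ := if j < 2 then -1 else 1

lemma s2_sq (j : ℕ) : s2 j * s2 j = 1 := by unfold s2; split <;> norm_num

lemma abs_s2 (j : ℕ) : |s2 j| = 1 := by unfold s2; split <;> norm_num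

def Slie (d : ℕ) : Pt d ≃ₗᵢ[ℝ] Pt d where
  toFun x := (WithLp.equiv 2 (∀ _ : Fin d, ℝ)).symm fun j => s2 j * x j
  invFun x := (WithLp.equiv 2 (∀ _ : Fin d, ℝ)).symm fun j => s2 j * x j
  map_add' x y := by
    ext j
    simp [WithLp.equiv_symm_apply, PiLp.toLp_apply]
    ring
  map_smul' c x := by
    ext j
    simp [WithLp.equiv_symm_apply, PiLp.toLp_apply]
    ring
  left_inv x := by
    ext j
    simp [WithLp.equiv_symm_apply, PiLp.toLp_apply, ← mul_assoc, s2_sq]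
  right_inv x := by
    ext j
    simp [WithLp.equiv_symm_apply, PiLp.toLp_apply, ← mul_assoc, s2_sq]
  norm_map' x := by
    simp only [EuclideanSpace.norm_eq, LinearEquiv.coe_mk, LinearMap.coe_mk, AddHom.coe_mk, WithLp.equiv_symm_apply, PiLp.toLp_apply]
    congr 1
    apply Finset.sum_congr rfl
    intro j _
    rw [norm_mul]
    simp [Real.norm_eq_abs, abs_s2]

lemma Slie_apply {d : ℕ} (x : Pt d) (j : Fin d) : Slie d x j = s2 j * x j := rfl

lemma Slie_single {d : ℕ} (j : ℕ) (h : j < d) :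
    Slie d (EuclideanSpace.single ⟨j, h⟩ (1:ℝ)) = s2 j • EuclideanSpace.single ⟨j, h⟩ (1:ℝ) := by
  ext i
  rw [Slie_apply]
  simp only [PiLp.smul_apply, smul_eq_mul, EuclideanSpace.single_apply]
  split_ifs with hi
  · subst hi; simp
  · simp

lemma pdC_comp {d : ℕ} (g : Pt d → ℂ) (hg : Differentiable ℝ g) (j : ℕ) (x : Pt d) :
    pdC d (fun y => g (Slie d y)) j x = (s2 j : ℂ) * pdC d g j (Slie d x) := by
  unfold pdC
  split
  · next h =>
    have hc : fderiv ℝ (g ∘ (Slie d)) x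
        = (fderiv ℝ g (Slie d x)).comp (fderiv ℝ (Slie d) x) :=
      fderiv_comp x (hg.differentiableAt) ((Slie d).differentiableAt)
    have hc' : fderiv ℝ (fun y => g (Slie d y)) x
        = (fderiv ℝ g (Slie d x)).comp (fderiv ℝ (⇑(Slie d)) x) := hc
    rw [hc', (Slie d).fderiv]
    simp only [ContinuousLinearMap.comp_apply]
    have h2 : ∀ v : Pt d, ((Slie d : Pt d ≃L[ℝ] Pt d) : Pt d →L[ℝ] Pt d) v = Slie d v :=
      fun v => rfl
    rw [h2, Slie_single j h, ContinuousLinearMap.map_smul]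
    simp [Complex.real_smul]
  · simp

lemma nthC_comp {d : ℕ} (x : Pt d) (j : ℕ) :
    nthC d (Slie d x) j = s2 j * nthC d x j := by
  unfold nthC
  split
  · rw [Slie_apply]
  · ring

lemma L0_comp {d : ℕ} (g : Pt d → ℂ) (hg : Differentiable ℝ g) (x : Pt d) :
    L0op d (fun y => g (Slie d y)) x = - L0op d g (Slie d x) := by
  unfold L0op
  rw [pdC_comp g hg 0, pdC_comp g hg 1]
  norm_num [s2]
  ring

lemma L1_comp {d : ℕ} (g : Pt d → ℂ) (hg : Differentiable ℝ g) (x : Pt d) :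
    L1op d (fun y => g (Slie d y)) x = - L1op d g (Slie d x) := by
  unfold L1op
  rw [pdC_comp g hg 0, pdC_comp g hg 1]
  norm_num [s2]
  ring

lemma socDen_comp {d : ℕ} (g1 g0 gm1 : Pt d → ℂ)
    (h1 : Differentiable ℝ g1) (h0 : Differentiable ℝ g0) (hm1 : Differentiable ℝ gm1)
    (x : Pt d) :
    socDen d (fun y => g1 (Slie d y)) (fun y => g0 (Slie d y)) (fun y => gm1 (Slie d y)) x
      = - socDen d g1 g0 gm1 (Slie d x) := by
  unfold socDen
  rw [L0_comp g0 h0, L0_comp gm1 hm1, L1_comp g1 h1, L1_comp g0 h0]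
  rw [show ((starRingEnd ℂ) (g1 (Slie d x)) * -L0op d g0 (Slie d x)
      + (starRingEnd ℂ) (g0 (Slie d x)) * (-L0op d gm1 (Slie d x) + -L1op d g1 (Slie d x))
      + (starRingEnd ℂ) (gm1 (Slie d x)) * -L1op d g0 (Slie d x))
      = -((starRingEnd ℂ) (g1 (Slie d x)) * L0op d g0 (Slie d x)
      + (starRingEnd ℂ) (g0 (Slie d x)) * (L0op d gm1 (Slie d x) + L1op d g1 (Slie d x))
      + (starRingEnd ℂ) (gm1 (Slie d x)) * L1op d g0 (Slie d x)) from by ring]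
  rw [Complex.neg_re]

lemma gradsq_comp {d : ℕ} (g : Pt d → ℂ) (hg : Differentiable ℝ g) (x : Pt d) :
    gradsq d (fun y => g (Slie d y)) x = gradsq d g (Slie d x) := by
  unfold gradsq
  apply Finset.sum_congr rfl
  intro j _
  rw [pdC_comp g hg j, norm_mul]
  have : ‖((s2 (j:ℕ) : ℝ) : ℂ)‖ = 1 := by
    rw [Complex.norm_real, Real.norm_eq_abs, abs_s2]
  rw [this, one_mul]

lemma rotDen_comp {d : ℕ} (g : Pt d → ℂ) (hg : Differentiable ℝ g) (x : Pt d) :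
    rotDen d (fun y => g (Slie d y)) x = rotDen d g (Slie d x) := by
  unfold rotDen
  have hLz : Lzop d (fun y => g (Slie d y)) x = Lzop d g (Slie d x) := by
    unfold Lzop
    rw [pdC_comp g hg 0, pdC_comp g hg 1, nthC_comp x 0, nthC_comp x 1]
    norm_num [s2]
    try ring
  rw [hLz]

end Stmt12Aux

open Stmt12Aux in
/-- Negativity of the SOC energy: a ground state `Φ_g` of the rotating SOC spin-1 BEC
in a radially symmetric trap satisfies `E_soc(Φ_g) ≤ 0`. -/
theorem stmt12 (d : ℕ) (hd2 : 2 ≤ d) (hd3 : d ≤ 3)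
    (c0 c1 Ω γ : ℝ) (V : Pt d → ℝ)
    (hrad : ∀ x y : Pt d, ‖x‖ = ‖y‖ → V x = V y)
    (g1 g0 gm1 : Pt d → ℂ) (hg : InM d V g1 g0 gm1)
    (hmin : ∀ ψ1 ψ0 ψm1 : Pt d → ℂ, InM d V ψ1 ψ0 ψm1 →
      Etot d V c0 c1 Ω γ g1 g0 gm1 ≤ Etot d V c0 c1 Ω γ ψ1 ψ0 ψm1) :
    Esoc d γ g1 g0 gm1 ≤ 0 := by
  classical
  set S := Slie d with hS
  have hMP := (Slie d).measurePreserving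
  have hME : MeasurableEmbedding (Slie d) :=
    (Slie d).toHomeomorph.measurableEmbedding
  have hint : ∀ f : Pt d → ℝ, (∫ x, f (Slie d x)) = ∫ x, f x :=
    fun f => hMP.integral_comp hME f
  have hintg : ∀ f : Pt d → ℝ, Integrable f → Integrable (fun x => f (Slie d x)) :=
    fun f hf => (hMP.integrable_comp hf.aestronglyMeasurable).mpr hf
  obtain ⟨hd1, hd0, hdm1, hirho, higrad, hipot, hirho2, hiF, hirot, hisoc, hmass⟩ := hg
  set ψ1 : Pt d → ℂ := fun y => g1 (Slie d y) with hψ1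
  set ψ0 : Pt d → ℂ := fun y => g0 (Slie d y) with hψ0
  set ψm1 : Pt d → ℂ := fun y => gm1 (Slie d y) with hψm1
  have hV : ∀ x, V x = V (Slie d x) := fun x =>
    hrad x (Slie d x) (by rw [(Slie d).norm_map])
  have e_grad : (fun x => gradsq d ψ1 x + gradsq d ψ0 x + gradsq d ψm1 x)
      = fun x => (fun y => gradsq d g1 y + gradsq d g0 y + gradsq d gm1 y) (Slie d x) := by
    funext x
    simp only [hψ1, hψ0, hψm1, gradsq_comp g1 hd1, gradsq_comp g0 hd0, gradsq_comp gm1 hdm1]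
  have e_rot : (fun x => rotDen d ψ1 x + rotDen d ψ0 x + rotDen d ψm1 x)
      = fun x => (fun y => rotDen d g1 y + rotDen d g0 y + rotDen d gm1 y) (Slie d x) := by
    funext x
    simp only [hψ1, hψ0, hψm1, rotDen_comp g1 hd1, rotDen_comp g0 hd0, rotDen_comp gm1 hdm1]
  have e_soc : (fun x => socDen d ψ1 ψ0 ψm1 x)
      = fun x => (fun y => - socDen d g1 g0 gm1 y) (Slie d x) := by
    funext x
    simp only [hψ1, hψ0, hψm1]
    exact socDen_comp g1 g0 gm1 hd1 hd0 hdm1 x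
  have e_pot : (fun x => V x * rho d ψ1 ψ0 ψm1 x)
      = fun x => (fun y => V y * rho d g1 g0 gm1 y) (Slie d x) := by
    funext x
    rw [hV x]
    rfl
  have hψM : InM d V ψ1 ψ0 ψm1 := by
    refine ⟨hd1.comp (Slie d).differentiable, hd0.comp (Slie d).differentiable,
      hdm1.comp (Slie d).differentiable, ?_, ?_, ?_, ?_, ?_, ?_, ?_, ?_⟩
    · exact hintg _ hirho
    · rw [e_grad]; exact hintg _ higrad
    · rw [e_pot]; exact hintg _ hipot
    · exact hintg _ hirho2
    · exact hintg _ hiF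
    · rw [e_rot]; exact hintg _ hirot
    · rw [e_soc]; exact hintg _ hisoc.neg
    · exact (hint (fun y => rho d g1 g0 gm1 y)).trans hmass
  have i_grad : (∫ x, (gradsq d ψ1 x + gradsq d ψ0 x + gradsq d ψm1 x))
      = ∫ x, (gradsq d g1 x + gradsq d g0 x + gradsq d gm1 x) := by
    rw [e_grad]; exact hint (fun y => gradsq d g1 y + gradsq d g0 y + gradsq d gm1 y)
  have i_pot : (∫ x, V x * rho d ψ1 ψ0 ψm1 x) = ∫ x, V x * rho d g1 g0 gm1 x := by
    rw [e_pot]; exact hint (fun y => V y * rho d g1 g0 gm1 y)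
  have i_rot : (∫ x, (rotDen d ψ1 x + rotDen d ψ0 x + rotDen d ψm1 x))
      = ∫ x, (rotDen d g1 x + rotDen d g0 x + rotDen d gm1 x) := by
    rw [e_rot]; exact hint (fun y => rotDen d g1 y + rotDen d g0 y + rotDen d gm1 y)
  have i_soc : (∫ x, socDen d ψ1 ψ0 ψm1 x) = ∫ x, -socDen d g1 g0 gm1 x := by
    rw [e_soc]; exact hint (fun y => -socDen d g1 g0 gm1 y)
  have hEkin : Ekin d ψ1 ψ0 ψm1 = Ekin d g1 g0 gm1 := by
    unfold Ekin; rw [i_grad]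
  have hEpot : Epot d V ψ1 ψ0 ψm1 = Epot d V g1 g0 gm1 := by
    unfold Epot; rw [i_pot]
  have hEspin : Espin d c0 c1 ψ1 ψ0 ψm1 = Espin d c0 c1 g1 g0 gm1 := by
    unfold Espin
    exact hint (fun y => c0 / 2 * (rho d g1 g0 gm1 y) ^ 2 + c1 / 2 * Fsq d g1 g0 gm1 y)
  have hErot : Erot d Ω ψ1 ψ0 ψm1 = Erot d Ω g1 g0 gm1 := by
    unfold Erot; rw [i_rot]
  have hEsoc : Esoc d γ ψ1 ψ0 ψm1 = - Esoc d γ g1 g0 gm1 := by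
    unfold Esoc
    rw [i_soc, integral_neg]
    ring
  have h := hmin ψ1 ψ0 ψm1 hψM
  unfold Etot at h
  rw [hEkin, hEpot, hEspin, hErot, hEsoc] at h
  linarith

end
end

section
/- Let Φⁿ be on the L² unit sphere with residual rⁿ = H(Φⁿ) − μₙΦⁿ satisfying Re⟨Φⁿ, rⁿ⟩ = 0, where μₙ = Re⟨H(Φⁿ),Φⁿ⟩. Let 𝒫 be a (real-)symmetric positive definite preconditioner, Dⁿ = −𝒫rⁿ (steepest descent choice, βⁿ = 0), and Pⁿ = Dⁿ − Re⟨Dⁿ,Φⁿ⟩Φⁿ ≠ 0. Then the linearized slope coefficient bₙ = (2/‖Pⁿ‖)Re⟨Pⁿ, rⁿ + μₙΦⁿ⟩ satisfies bₙ = −(2/‖Pⁿ‖)Re⟨𝒫rⁿ, rⁿ⟩ < 0 whenever rⁿ ≠ 0. -/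
/-- The preconditioned steepest descent direction is an energy descent direction:
with `r = H(Φ) − μΦ`, `μ = Re⟨H(Φ),Φ⟩`, `Pc` (the preconditioner 𝒫) symmetric positive
definite, `D = −Pc r`, `P = D − Re⟨D,Φ⟩Φ ≠ 0`, the slope coefficient
`b = (2/‖P‖)·Re⟨P, r + μΦ⟩` equals `−(2/‖P‖)·Re⟨Pc r, r⟩` and is negative if `r ≠ 0`. -/
theorem stmt17 {H : Type*} [NormedAddCommGroup H] [InnerProductSpace ℂ H]
    (Pc : H → H)
    (hsym : ∀ u v : H, (inner ℂ (Pc u) v : ℂ).re = (inner ℂ u (Pc v) : ℂ).re)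
    (hpos : ∀ u : H, u ≠ 0 → 0 < (inner ℂ (Pc u) u : ℂ).re)
    (Φ HΦ : H) (hΦ : ‖Φ‖ = 1)
    (μ : ℝ) (hμ : μ = (inner ℂ HΦ Φ : ℂ).re)
    (r : H) (hrdef : r = HΦ - (μ : ℂ) • Φ) (hr0 : r ≠ 0)
    (horth : (inner ℂ Φ r : ℂ).re = 0)
    (D : H) (hD : D = -Pc r)
    (P : H) (hPdef : P = D - ((inner ℂ D Φ : ℂ).re : ℝ) • Φ) (hP : P ≠ 0)
    (b : ℝ) (hb : b = 2 / ‖P‖ * (inner ℂ P (r + (μ : ℂ) • Φ) : ℂ).re) :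
    b = -(2 / ‖P‖) * (inner ℂ (Pc r) r : ℂ).re ∧ b < 0 := by
  have hΦΦ : (inner ℂ Φ Φ : ℂ).re = 1 := by
    rw [inner_self_eq_norm_sq_to_K, hΦ]; norm_num
  have hDr : (inner ℂ D r : ℂ).re = -(inner ℂ (Pc r) r : ℂ).re := by
    rw [hD, inner_neg_left]; simp
  have hrΦ : (inner ℂ r Φ : ℂ).re = 0 := by
    rw [← inner_conj_symm, Complex.conj_re]; exact horth
  have key : (inner ℂ P (r + (μ : ℂ) • Φ) : ℂ).re = -(inner ℂ (Pc r) r : ℂ).re := by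
    rw [hPdef, ← Complex.coe_smul]
    simp only [inner_add_right, inner_sub_left, inner_smul_right, inner_smul_left,
      Complex.conj_ofReal, Complex.conj_re, Complex.conj_im, Complex.add_re,
      Complex.sub_re, Complex.mul_re, Complex.smul_re, Complex.ofReal_re,
      Complex.ofReal_im]
    rw [hDr]
    have h1 : (inner ℂ Φ r : ℂ).re = 0 := horth
    have h2 : (inner ℂ D Φ : ℂ).im = -((inner ℂ Φ D : ℂ).im) := by
      rw [← inner_conj_symm, Complex.conj_im]
    rw [h1, hΦΦ]; ring
  have hPnorm : 0 < ‖P‖ := norm_pos_iff.mpr hP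
  have hposr := hpos r hr0
  constructor
  · rw [hb, key]; ring
  · rw [hb, key]
    have : 0 < 2 / ‖P‖ := by positivity
    nlinarith
end
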